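/- Let x∈(−∞,1)∖{0} (in the application, x=−A/(2B) with A>0 and B≠0). Define F₁(t)=1−t, P₁(t)=t²−(3/(2x))t−(3/2)(1−1/x) (so P₁(1)=−1/2), and ℋ(t)=(x/(3(1−xt)))·[P₁(t)/P₁(1)−F₁(xt)/F₁(x)+(2x·F₁(xt)/P₁(1))·∫_t¹ τ^{−2}F₁(xτ)^{−2}·(∫₀^τ s·F₁(xs)·(1−xs)^{−1}·P₁(s)ds)dτ]−t+P₁(t)/P₁(1) for t∈[0,1]. Then ∫₀¹ s·F₁(xs)·(1−xs)^{−1}·ℋ(s)ds=(x−1)/(2x). In particular this integral is nonzero (the transversality condition for the 1-fold mode holds) if and only if x∉{0,1}. -/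

import Mathlib

open MeasureTheory Real Set

/-- `F₁(t) = 1 - t`, the `n = 1` hypergeometric function `F(a₁,b₁;c₁;t)`. -/
noncomputable def F1 (t : ℝ) : ℝ := 1 - t

/-- `P₁(t) = t² - (3/(2x))t - (3/2)(1 - 1/x)`. -/
noncomputable def P1 (x t : ℝ) : ℝ := t ^ 2 - 3 / (2 * x) * t - 3 / 2 * (1 - 1 / x)

/-- The transversality integrand `ℋ` for the 1-fold mode. -/
noncomputable def Hfun (x t : ℝ) : ℝ :=
  x / (3 * (1 - x * t)) *
      (P1 x t / P1 x 1 - F1 (x * t) / F1 x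
        + 2 * x * F1 (x * t) / P1 x 1 *
            ∫ τ in t..1, (τ ^ 2 * F1 (x * τ) ^ 2)⁻¹ *
              ∫ s in (0:ℝ)..τ, s * F1 (x * s) * (1 - x * s)⁻¹ * P1 x s)
    - t + P1 x t / P1 x 1

lemma pos_aux {x s : ℝ} (hx : x < 1) (hs : s ∈ Icc (0:ℝ) 1) : 0 < 1 - x * s := by
  rcases eq_or_lt_of_le hs.1 with h | h
  · simp [← h]
  · have h1 : 0 < s * (1 - x) := mul_pos h (by linarith)
    nlinarith [hs.2]

lemma inner_eval {x : ℝ} (hx : x < 1) {τ : ℝ} (hτ : τ ∈ Icc (0:ℝ) 1) :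
    (∫ s in (0:ℝ)..τ, s * F1 (x * s) * (1 - x * s)⁻¹ * P1 x s)
      = τ^4/4 - τ^3/(2*x) - (3/4 - 3/(4*x)) * τ^2 := by
  have hsub : uIcc (0:ℝ) τ ⊆ Icc 0 1 := by
    rw [uIcc_of_le hτ.1]
    exact Icc_subset_Icc le_rfl hτ.2
  have hcongr : ∀ s ∈ uIcc (0:ℝ) τ,
      s * F1 (x * s) * (1 - x * s)⁻¹ * P1 x s = s * P1 x s := by
    intro s hs
    have h := pos_aux hx (hsub hs)
    rw [F1]
    rw [mul_assoc s, mul_inv_cancel₀ (ne_of_gt h), mul_one]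
  rw [intervalIntegral.integral_congr hcongr]
  have hderiv : ∀ s ∈ uIcc (0:ℝ) τ,
      HasDerivAt (fun s => s^4/4 - s^3/(2*x) - 3/4*(1-1/x)*s^2) (s * P1 x s) s := by
    intro s _
    have h := (((hasDerivAt_pow 4 s).div_const 4).sub
      ((hasDerivAt_pow 3 s).div_const (2*x))).sub
      ((hasDerivAt_pow 2 s).const_mul (3/4*(1-1/x)))
    convert h using 1
    · rfl
    · rfl
    · rfl
    simp [P1]
    ring
  have hint : IntervalIntegrable (fun s => s * P1 x s) volume 0 τ := by
    apply Continuous.intervalIntegrable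
    unfold P1; continuity
  rw [intervalIntegral.integral_eq_sub_of_hasDerivAt hderiv hint]
  ring

lemma middle_eval {x : ℝ} (hx : x < 1) (hx0 : x ≠ 0) {t : ℝ} (ht : t ∈ Icc (0:ℝ) 1) :
    (∫ τ in t..1, (τ ^ 2 * F1 (x * τ) ^ 2)⁻¹ *
        ∫ s in (0:ℝ)..τ, s * F1 (x * s) * (1 - x * s)⁻¹ * P1 x s)
      = (1-t)/(4*x^2) + ((3*x - 3*x^2 - 1)/(4*x^2)/x) * ((1-x)⁻¹ - (1-x*t)⁻¹) := by
  have hsub : uIcc t 1 ⊆ Icc 0 1 := by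
    rw [uIcc_of_le ht.2]; exact Icc_subset_Icc ht.1 le_rfl
  -- step 1: a.e. congruence to the simplified integrand
  have hcongr : (∫ τ in t..1, (τ ^ 2 * F1 (x * τ) ^ 2)⁻¹ *
        ∫ s in (0:ℝ)..τ, s * F1 (x * s) * (1 - x * s)⁻¹ * P1 x s)
      = ∫ τ in t..1, (1/(4*x^2) + (3*x - 3*x^2 - 1)/(4*x^2) * ((1-x*τ)^2)⁻¹) := by
    apply intervalIntegral.integral_congr_ae
    filter_upwards [ae_iff.2 (by simpa using (measure_singleton (0:ℝ)) : volume {τ : ℝ | ¬ τ ≠ 0} = 0)] with τ hτ0 hmem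
    have hτ : τ ∈ Icc (0:ℝ) 1 := hsub (uIoc_subset_uIcc hmem)
    rw [inner_eval hx hτ]
    have h1 : (0:ℝ) < 1 - x * τ := pos_aux hx hτ
    have h2 : F1 (x * τ) = 1 - x * τ := rfl
    rw [h2]
    field_simp [hx0, hτ0, ne_of_gt h1]
    field_simp [show 1 - τ * x ≠ 0 by rw [mul_comm]; exact ne_of_gt h1]
    ring
  rw [hcongr]
  -- step 2: antiderivative
  have hderiv : ∀ τ ∈ uIcc t 1,
      HasDerivAt (fun τ => τ/(4*x^2) + ((3*x - 3*x^2 - 1)/(4*x^2)/x) * (1-x*τ)⁻¹)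
        (1/(4*x^2) + (3*x - 3*x^2 - 1)/(4*x^2) * ((1-x*τ)^2)⁻¹) τ := by
    intro τ hτ
    have h1 : (0:ℝ) < 1 - x * τ := pos_aux hx (hsub hτ)
    have hf : HasDerivAt (fun τ : ℝ => 1 - x * τ) (-x) τ := by
      simpa using ((hasDerivAt_id τ).const_mul x).const_sub 1
    have hinv := hf.inv (ne_of_gt h1)
    have h := ((hasDerivAt_id τ).div_const (4*x^2)).add (hinv.const_mul ((3*x - 3*x^2 - 1)/(4*x^2)/x))
    convert h using 1
    · rfl
    · rfl
    · rfl
    field_simp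
    try ring
  have hint : IntervalIntegrable (fun τ => 1/(4*x^2) + (3*x - 3*x^2 - 1)/(4*x^2) * ((1-x*τ)^2)⁻¹) volume t 1 := by
    apply ContinuousOn.intervalIntegrable
    apply ContinuousOn.add continuousOn_const
    apply ContinuousOn.mul continuousOn_const
    apply ContinuousOn.inv₀
    · fun_prop
    · intro τ hτ
      have := pos_aux hx (hsub hτ)
      positivity
  rw [intervalIntegral.integral_eq_sub_of_hasDerivAt hderiv hint]
  ring

lemma Hfun_eq {x : ℝ} (hx : x < 1) (hx0 : x ≠ 0) {t : ℝ} (ht : t ∈ Icc (0:ℝ) 1) :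
    Hfun x t = -2*t^2 + 3*t/x + 2 - 3/x := by
  have h1 : (0:ℝ) < 1 - x * t := pos_aux hx ht
  have h2 : (0:ℝ) < 1 - x := by linarith
  rw [Hfun, middle_eval hx hx0 ht]
  show x / (3 * (1 - x * t)) *
      (P1 x t / P1 x 1 - (1 - x * t) / (1 - x)
        + 2 * x * (1 - (x * t)) / P1 x 1 * _) - t + P1 x t / P1 x 1 = _
  have e1 : P1 x 1 = -(1/2) := by rw [P1]; field_simp; ring
  rw [e1, P1]
  field_simp [ne_of_gt h1, ne_of_gt h2]
  ring

/-- the explicit value `(x-1)/(2x)` of the transversality integral for the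
1-fold mode; in particular it is nonzero if and only if `x ∉ {0,1}`. -/
theorem onefold_transversality (x : ℝ) (hx : x < 1) (hx0 : x ≠ 0) :
    (∫ s in (0:ℝ)..1, s * F1 (x * s) * (1 - x * s)⁻¹ * Hfun x s) = (x - 1) / (2 * x) ∧
    ((∫ s in (0:ℝ)..1, s * F1 (x * s) * (1 - x * s)⁻¹ * Hfun x s) ≠ 0 ↔
      x ≠ 0 ∧ x ≠ 1) := by
  have key : (∫ s in (0:ℝ)..1, s * F1 (x * s) * (1 - x * s)⁻¹ * Hfun x s)
      = (x - 1) / (2 * x) := by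
    have hcongr : ∀ s ∈ uIcc (0:ℝ) 1,
        s * F1 (x * s) * (1 - x * s)⁻¹ * Hfun x s
          = -2*s^3 + 3*s^2/x + (2 - 3/x)*s := by
      intro s hs
      rw [uIcc_of_le zero_le_one] at hs
      have h1 := pos_aux hx hs
      rw [Hfun_eq hx hx0 hs]
      show s * (1 - x*s) * (1 - x * s)⁻¹ * _ = _
      rw [mul_assoc s, mul_inv_cancel₀ (ne_of_gt h1), mul_one]
      field_simp
      ring
    rw [intervalIntegral.integral_congr hcongr]
    have hderiv : ∀ s ∈ uIcc (0:ℝ) 1,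
        HasDerivAt (fun s => -s^4/2 + s^3/x + (2 - 3/x)*s^2/2)
          (-2*s^3 + 3*s^2/x + (2 - 3/x)*s) s := by
      intro s _
      have h := ((((hasDerivAt_pow 4 s).neg.div_const 2).add
        ((hasDerivAt_pow 3 s).div_const x))).add
        (((hasDerivAt_pow 2 s).const_mul (2 - 3/x)).div_const 2)
      convert h using 1
      · rfl
      · rfl
      · rfl
      all_goals first
        | (ext y; ring)
        | (field_simp; ring)
        | ring
    have hint : IntervalIntegrable (fun s => -2*s^3 + 3*s^2/x + (2 - 3/x)*s)
        volume 0 1 := by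
      apply Continuous.intervalIntegrable; continuity
    rw [intervalIntegral.integral_eq_sub_of_hasDerivAt hderiv hint]
    field_simp
    ring
  refine ⟨key, ?_⟩
  rw [key]
  constructor
  · intro _; exact ⟨hx0, ne_of_lt hx⟩
  · intro _
    apply div_ne_zero (by linarith)
    simpa using hx0
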